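/- For all row vectors U, Z ∈ ℂⁿ and every symmetric W ∈ M_n(ℂ), exp(U·ᵗZ + ½·U·W·ᵗU) = ∑_{s∈ℕⁿ} (U^s/s!)·P_s(Z,W), where P_s(Z,W) = ∑_{a ∈ A_n, ã ≤ s} (s!/(2^{â}·a!·(s−ã)!))·Z^{s−ã}·W^a; here A_n is the set of symmetric n×n matrices a = (a_{ij}) with entries in ℕ, W^a = ∏_{1≤i≤j≤n} W_{ij}^{a_{ij}}, a! = ∏_{1≤i≤j≤n} a_{ij}!, â = ∑_{i=1}^n a_{ii}, ã ∈ ℕⁿ is defined by ã_k = a_{kk} + ∑_{i=1}^n a_{ik}, ã ≤ s means ã_k ≤ s_k for all k, and for r ∈ ℕⁿ, Z^r = ∏_i Z_i^{r_i}, r! = ∏_i r_i!. The series converges absolutely for all U. -/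

import Mathlib

open Matrix
open scoped Nat
set_option maxHeartbeats 1000000


/-- `ã ∈ ℕⁿ`, `ã_k = a_{kk} + ∑_i a_{ik}`. -/
def tildeV {n : ℕ} (a : Matrix (Fin n) (Fin n) ℕ) : Fin n → ℕ :=
  fun k => a k k + ∑ i, a i k

/-- `â = ∑_i a_{ii}`. -/
def hatV {n : ℕ} (a : Matrix (Fin n) (Fin n) ℕ) : ℕ := ∑ i, a i i

/-- `a! = ∏_{i≤j} a_{ij}!`. -/
def aFact {n : ℕ} (a : Matrix (Fin n) (Fin n) ℕ) : ℕ :=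
  ∏ i, ∏ j, if i ≤ j then (a i j)! else 1

/-- `W^a = ∏_{i≤j} W_{ij}^{a_{ij}}`. -/
def mPow {n : ℕ} (W : Matrix (Fin n) (Fin n) ℂ) (a : Matrix (Fin n) (Fin n) ℕ) : ℂ :=
  ∏ i, ∏ j, if i ≤ j then W i j ^ a i j else 1

/-- `Z^r = ∏_i Z_i^{r_i}`. -/
def vPow {n : ℕ} (Z : Fin n → ℂ) (r : Fin n → ℕ) : ℂ := ∏ i, Z i ^ r i

/-- `r! = ∏_i r_i!`. -/
def vFact {n : ℕ} (r : Fin n → ℕ) : ℕ := ∏ i, (r i)!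

/-- The polynomial
`P_s(Z,W) = ∑_{a ∈ A_n, ã ≤ s} s!/(2^â a! (s−ã)!) · Z^{s−ã} · W^a`,
where `A_n` is the set of symmetric `n×n` matrices over `ℕ`. -/
noncomputable def Ppoly {n : ℕ} (s : Fin n → ℕ) (Z : Fin n → ℂ)
    (W : Matrix (Fin n) (Fin n) ℂ) : ℂ :=
  ∑' a : Matrix (Fin n) (Fin n) ℕ,
    if a.IsSymm ∧ ∀ k, tildeV a k ≤ s k then
      (vFact s : ℂ) /
          ((2 ^ hatV a : ℂ) * (aFact a : ℂ) * (vFact (fun k => s k - tildeV a k) : ℂ))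
        * vPow Z (fun k => s k - tildeV a k) * mPow W a
    else 0

lemma expHasSum (x : ℂ) : HasSum (fun k : ℕ => x ^ k / (k ! : ℂ)) (Complex.exp x) := by
  rw [Complex.exp_eq_exp_ℂ]
  exact NormedSpace.expSeries_div_hasSum_exp x

lemma expNormSummable (x : ℂ) : Summable (fun k : ℕ => ‖x ^ k / (k ! : ℂ)‖) :=
  NormedSpace.norm_expSeries_div_summable x

lemma keyFin : ∀ (m : ℕ) (x : Fin m → ℂ),
    HasSum (fun g : Fin m → ℕ => ∏ p, x p ^ g p / ((g p)! : ℂ)) (Complex.exp (∑ p, x p)) ∧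
    Summable (fun g : Fin m → ℕ => ‖∏ p, x p ^ g p / ((g p)! : ℂ)‖) := by
  intro m
  induction m with
  | zero =>
    intro x
    have hu := hasSum_unique (fun g : Fin 0 → ℕ => ∏ p, x p ^ g p / ((g p)! : ℂ))
    have hn := hasSum_unique (fun g : Fin 0 → ℕ => ‖∏ p, x p ^ g p / ((g p)! : ℂ)‖)
    constructor
    · simpa using hu
    · exact hn.summable
  | succ m ih =>
    intro x
    obtain ⟨ih1, ih2⟩ := ih (fun i => x i.succ)
    have h1 := expHasSum (x 0)
    have h1n := expNormSummable (x 0)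
    have hGn : Summable (fun q : ℕ × (Fin m → ℕ) =>
        ‖(x 0 ^ q.1 / (q.1 ! : ℂ)) * ∏ p, x p.succ ^ q.2 p / ((q.2 p)! : ℂ)‖) :=
      Summable.mul_norm (f := fun k : ℕ => x 0 ^ k / (k ! : ℂ))
        (g := fun h : Fin m → ℕ => ∏ p : Fin m, x p.succ ^ h p / ((h p)! : ℂ)) h1n ih2
    have hG1 : HasSum (fun q : ℕ × (Fin m → ℕ) =>
        (x 0 ^ q.1 / (q.1 ! : ℂ)) * ∏ p, x p.succ ^ q.2 p / ((q.2 p)! : ℂ))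
        (Complex.exp (x 0) * Complex.exp (∑ p : Fin m, x p.succ)) :=
      HasSum.mul (f := fun k : ℕ => x 0 ^ k / (k ! : ℂ))
        (g := fun h : Fin m → ℕ => ∏ p : Fin m, x p.succ ^ h p / ((h p)! : ℂ))
        h1 ih1 hGn.of_norm
    set e : ℕ × (Fin m → ℕ) ≃ (Fin (m + 1) → ℕ) := (Fin.consEquiv fun _ => ℕ) with he
    have hcomp : (fun g : Fin (m + 1) → ℕ => ∏ p, x p ^ g p / ((g p)! : ℂ)) ∘ e
        = fun q : ℕ × (Fin m → ℕ) =>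
            (x 0 ^ q.1 / (q.1 ! : ℂ)) * ∏ p, x p.succ ^ q.2 p / ((q.2 p)! : ℂ) := by
      funext q
      simp [Fin.prod_univ_succ, e, Fin.consEquiv, mul_div_mul_comm]
    have hexp : Complex.exp (x 0) * Complex.exp (∑ p : Fin m, x p.succ)
        = Complex.exp (∑ p, x p) := by
      rw [← Complex.exp_add, Fin.sum_univ_succ]
    constructor
    · refine e.hasSum_iff.mp ?_
      rw [hcomp, ← hexp]
      exact hG1
    · refine e.summable_iff.mp ?_
      have : (fun g : Fin (m + 1) → ℕ => ‖∏ p, x p ^ g p / ((g p)! : ℂ)‖) ∘ e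
          = fun q => ‖(x 0 ^ q.1 / (q.1 ! : ℂ)) * ∏ p, x p.succ ^ q.2 p / ((q.2 p)! : ℂ)‖ := by
        funext q
        exact congrArg norm (congrFun hcomp q)
      rw [this]
      exact hGn

lemma keyP {P : Type*} [Fintype P] (x : P → ℂ) :
    HasSum (fun g : P → ℕ => ∏ p, x p ^ g p / ((g p)! : ℂ)) (Complex.exp (∑ p, x p)) ∧
    Summable (fun g : P → ℕ => ‖∏ p, x p ^ g p / ((g p)! : ℂ)‖) := by
  classical
  set e := Fintype.equivFin P with he
  obtain ⟨h1, h2⟩ := keyFin (Fintype.card P) (x ∘ e.symm)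
  set E : (P → ℕ) ≃ (Fin (Fintype.card P) → ℕ) := e.arrowCongr (Equiv.refl ℕ) with hE
  have hcomp : (fun g : Fin (Fintype.card P) → ℕ =>
      ∏ q, (x ∘ e.symm) q ^ g q / ((g q)! : ℂ)) ∘ E
      = fun g : P → ℕ => ∏ p, x p ^ g p / ((g p)! : ℂ) := by
    funext g
    simp only [Function.comp_apply]
    rw [← e.symm.prod_comp (fun p => x p ^ g p / ((g p)! : ℂ))]
    refine Finset.prod_congr rfl fun q _ => ?_
    simp [E, Equiv.arrowCongr]
  have hsum : ∑ q, (x ∘ e.symm) q = ∑ p, x p := e.symm.sum_comp x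
  constructor
  · have := E.hasSum_iff.mpr h1
    rw [hcomp, hsum] at this
    exact this
  · have h2' : Summable ((fun g : Fin (Fintype.card P) → ℕ =>
        ‖∏ q, (x ∘ e.symm) q ^ g q / ((g q)! : ℂ)‖) ∘ E) := E.summable_iff.mpr h2
    have : ((fun g : Fin (Fintype.card P) → ℕ =>
        ‖∏ q, (x ∘ e.symm) q ^ g q / ((g q)! : ℂ)‖) ∘ E)
        = fun g : P → ℕ => ‖∏ p, x p ^ g p / ((g p)! : ℂ)‖ := by
      funext g
      exact congrArg norm (congrFun hcomp g)
    rwa [this] at h2'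

namespace Stmt10Aux

abbrev T (n : ℕ) := {p : Fin n × Fin n // p.1 ≤ p.2}

variable {n : ℕ}

lemma prod_T {M : Type*} [CommMonoid M] (f : Fin n → Fin n → M) :
    ∏ p : T n, f p.1.1 p.1.2 = ∏ i, ∏ j, if i ≤ j then f i j else 1 := by
  classical
  rw [← Finset.prod_subtype
      ((Finset.univ ×ˢ Finset.univ).filter (fun p : Fin n × Fin n => p.1 ≤ p.2))
      (by simp) (fun p : Fin n × Fin n => f p.1 p.2)]
  rw [Finset.prod_filter, Finset.prod_product]

lemma sum_T {M : Type*} [AddCommMonoid M] (f : Fin n → Fin n → M) :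
    ∑ p : T n, f p.1.1 p.1.2 = ∑ i, ∑ j, if i ≤ j then f i j else 0 := by
  classical
  rw [← Finset.sum_subtype
      ((Finset.univ ×ˢ Finset.univ).filter (fun p : Fin n × Fin n => p.1 ≤ p.2))
      (by simp) (fun p : Fin n × Fin n => f p.1 p.2)]
  rw [Finset.sum_filter, Finset.sum_product]

def matOf (b : T n → ℕ) : Matrix (Fin n) (Fin n) ℕ :=
  Matrix.of fun i j => if h : i ≤ j then b ⟨(i, j), h⟩ else b ⟨(j, i), le_of_not_ge h⟩

lemma matOf_symm (b : T n → ℕ) : (matOf b).IsSymm := by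
  rw [Matrix.IsSymm.ext_iff]
  intro i j
  rcases le_or_gt i j with h | h
  · rcases eq_or_lt_of_le h with h' | h'
    · subst h'; rfl
    · have h2 : ¬ j ≤ i := not_le.2 h'
      simp [matOf, h, h2]
  · have h2 : ¬ i ≤ j := not_le.2 h
    simp [matOf, h.le, h2]

def toT (a : Matrix (Fin n) (Fin n) ℕ) : T n → ℕ := fun p => a p.1.1 p.1.2

lemma toT_matOf (b : T n → ℕ) : toT (matOf b) = b := by
  funext p
  obtain ⟨⟨i, j⟩, h⟩ := p
  simp [toT, matOf, h]

lemma matOf_toT {a : Matrix (Fin n) (Fin n) ℕ} (ha : a.IsSymm) : matOf (toT a) = a := by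
  ext i j
  by_cases h : i ≤ j
  · simp [matOf, toT, h]
  · simp [matOf, toT, h]
    exact ha.apply i j

lemma sum_ite_diag (a : Matrix (Fin n) (Fin n) ℕ) :
    (∑ p : T n, if p.1.1 = p.1.2 then a p.1.1 p.1.2 else 0) = hatV a := by
  rw [sum_T (f := fun i j => if i = j then a i j else 0)]
  unfold hatV
  refine Finset.sum_congr rfl fun i _ => ?_
  rw [Finset.sum_eq_single i]
  · simp
  · intro j _ hj
    simp [Ne.symm hj]
  · simp

lemma exponent_lemma (a : Matrix (Fin n) (Fin n) ℕ) (ha : a.IsSymm) (k : Fin n) :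
    ((∑ j, if k ≤ j then a k j else 0) + ∑ i, if i ≤ k then a i k else 0) = tildeV a k := by
  unfold tildeV
  have h1 : (∑ j, if k ≤ j then a k j else 0) = ∑ j, if k ≤ j then a j k else 0 :=
    Finset.sum_congr rfl fun j _ => by rw [ha.apply]
  rw [h1, ← Finset.sum_add_distrib]
  have h2 : ∀ j : Fin n, ((if k ≤ j then a j k else 0) + if j ≤ k then a j k else 0)
      = a j k + if j = k then a j k else 0 := by
    intro j
    rcases lt_trichotomy j k with h | h | h
    · simp [h.le, not_le.2 h, h.ne]
    · subst h; simp
    · simp [h.le, not_le.2 h, h.ne']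
  rw [Finset.sum_congr rfl fun j _ => h2 j, Finset.sum_add_distrib,
    Finset.sum_ite_eq' Finset.univ k (fun j => a j k)]
  simp [add_comm]

lemma prod_U_T (U : Fin n → ℂ) (a : Matrix (Fin n) (Fin n) ℕ) (ha : a.IsSymm) :
    ∏ p : T n, (U p.1.1 * U p.1.2) ^ a p.1.1 p.1.2 = ∏ k, U k ^ tildeV a k := by
  have h1 : ∀ p : T n, (U p.1.1 * U p.1.2) ^ a p.1.1 p.1.2
      = (U p.1.1 ^ a p.1.1 p.1.2) * (U p.1.2 ^ a p.1.1 p.1.2) := fun p => mul_pow _ _ _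
  rw [Finset.prod_congr rfl (fun p _ => h1 p), Finset.prod_mul_distrib,
    prod_T (f := fun i j => U i ^ a i j), prod_T (f := fun i j => U j ^ a i j)]
  have h2 : ∀ i : Fin n, (∏ j, if i ≤ j then U i ^ a i j else 1)
      = U i ^ (∑ j, if i ≤ j then a i j else 0) := by
    intro i
    rw [← Finset.prod_pow_eq_pow_sum]
    refine Finset.prod_congr rfl fun j _ => ?_
    split_ifs <;> simp
  have h3 : (∏ i, ∏ j, if i ≤ j then U j ^ a i j else 1)
      = ∏ j, U j ^ (∑ i, if i ≤ j then a i j else 0) := by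
    rw [Finset.prod_comm]
    refine Finset.prod_congr rfl fun j _ => ?_
    rw [← Finset.prod_pow_eq_pow_sum]
    refine Finset.prod_congr rfl fun i _ => ?_
    split_ifs <;> simp
  rw [Finset.prod_congr rfl fun i _ => h2 i, h3, ← Finset.prod_mul_distrib]
  refine Finset.prod_congr rfl fun k _ => ?_
  rw [← pow_add, exponent_lemma a ha k]

lemma half_sum (U : Fin n → ℂ) (W : Matrix (Fin n) (Fin n) ℂ) (hW : W.IsSymm) :
    (∑ p : T n, (if p.1.1 = p.1.2 then (1 / 2 : ℂ) else 1) * W p.1.1 p.1.2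
        * (U p.1.1 * U p.1.2))
      = (1 / 2 : ℂ) * ((U ᵥ* W) ⬝ᵥ U) := by
  classical
  set g : Fin n → Fin n → ℂ := fun i j => W i j * (U i * U j) with hg
  have hsymm : ∀ i j, g j i = g i j := by
    intro i j
    simp only [g]
    rw [hW.apply]
    ring
  have hexpand : (U ᵥ* W) ⬝ᵥ U = ∑ i, ∑ j, g i j := by
    simp only [dotProduct, Matrix.vecMul, Finset.sum_mul, g]
    rw [Finset.sum_comm]
    refine Finset.sum_congr rfl fun i _ => Finset.sum_congr rfl fun j _ => ?_
    ring
  have hT : (∑ p : T n, (if p.1.1 = p.1.2 then (1 / 2 : ℂ) else 1) * W p.1.1 p.1.2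
        * (U p.1.1 * U p.1.2))
      = ∑ i, ∑ j, if i ≤ j then (if i = j then (1 / 2 : ℂ) else 1) * g i j else 0 := by
    rw [← sum_T (f := fun i j => (if i = j then (1 / 2 : ℂ) else 1) * g i j)]
    refine Finset.sum_congr rfl fun p _ => ?_
    simp only [g]
    ring
  set A : ℂ := ∑ i, ∑ j, if i < j then g i j else 0 with hA
  set D : ℂ := ∑ i, ∑ j, if i = j then g i j else 0 with hD
  have hB : (∑ i, ∑ j, if j < i then g i j else 0) = A := by
    rw [Finset.sum_comm, hA]
    refine Finset.sum_congr rfl fun i _ => Finset.sum_congr rfl fun j _ => ?_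
    split_ifs <;> simp [hsymm]
  have hS : ∑ i, ∑ j, g i j = A + D + A := by
    have key : ∀ i j : Fin n, g i j = ((if i < j then g i j else 0)
        + (if i = j then g i j else 0)) + (if j < i then g i j else 0) := by
      intro i j
      rcases lt_trichotomy i j with h | h | h
      · simp [h, h.ne, h.asymm]
      · subst h; simp
      · simp [h, h.ne', h.asymm]
    calc ∑ i, ∑ j, g i j
        = ∑ i, ∑ j, (((if i < j then g i j else 0) + (if i = j then g i j else 0))
            + (if j < i then g i j else 0)) :=
          Finset.sum_congr rfl fun i _ => Finset.sum_congr rfl fun j _ => key i j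
      _ = (A + D) + ∑ i, ∑ j, (if j < i then g i j else 0) := by
          rw [← Finset.sum_add_distrib]
          simp only [Finset.sum_add_distrib]
      _ = A + D + A := by rw [hB]
  have hLHS : (∑ i, ∑ j, if i ≤ j then (if i = j then (1 / 2 : ℂ) else 1) * g i j else 0)
      = A + (1 / 2 : ℂ) * D := by
    have key : ∀ i j : Fin n, (if i ≤ j then (if i = j then (1 / 2 : ℂ) else 1) * g i j else 0)
        = (if i < j then g i j else 0) + (1 / 2 : ℂ) * (if i = j then g i j else 0) := by
      intro i j
      rcases lt_trichotomy i j with h | h | h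
      · simp [h, h.le, h.ne]
      · subst h; simp
      · simp [h.asymm, h.ne', not_le.2 h]
    calc (∑ i, ∑ j, if i ≤ j then (if i = j then (1 / 2 : ℂ) else 1) * g i j else 0)
        = ∑ i, ∑ j, ((if i < j then g i j else 0)
            + (1 / 2 : ℂ) * (if i = j then g i j else 0)) :=
          Finset.sum_congr rfl fun i _ => Finset.sum_congr rfl fun j _ => key i j
      _ = A + (1 / 2 : ℂ) * D := by
          simp only [Finset.sum_add_distrib, ← Finset.mul_sum]
          rfl
  rw [hT, hLHS, hexpand, hS]
  ring

lemma vFact_ne_zero (r : Fin n → ℕ) : (vFact r : ℂ) ≠ 0 := by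
  have : 0 < vFact r := Finset.prod_pos fun i _ => Nat.factorial_pos _
  exact_mod_cast this.ne'

lemma aFact_ne_zero (a : Matrix (Fin n) (Fin n) ℕ) : (aFact a : ℂ) ≠ 0 := by
  have : 0 < aFact a := Finset.prod_pos fun i _ => Finset.prod_pos fun j _ => by
    split_ifs
    · exact Nat.factorial_pos _
    · exact Nat.one_pos
  exact_mod_cast this.ne'

lemma term_eval (U Z : Fin n → ℂ) (W : Matrix (Fin n) (Fin n) ℂ)
    (a : Matrix (Fin n) (Fin n) ℕ) (ha : a.IsSymm) (r : Fin n → ℕ) :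
    ((∏ i, (U i * Z i) ^ r i / ((r i)! : ℂ)) *
      ∏ p : T n, ((if p.1.1 = p.1.2 then (1 / 2 : ℂ) else 1) * W p.1.1 p.1.2
          * (U p.1.1 * U p.1.2)) ^ toT a p / ((toT a p)! : ℂ))
    = vPow U (fun k => r k + tildeV a k) * vPow Z r * mPow W a /
        ((2 ^ hatV a : ℂ) * (aFact a : ℂ) * (vFact r : ℂ)) := by
  classical
  have h1 : (∏ i, (U i * Z i) ^ r i / ((r i)! : ℂ))
      = vPow U r * vPow Z r / (vFact r : ℂ) := by
    rw [Finset.prod_div_distrib]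
    congr 1
    · simp [mul_pow, Finset.prod_mul_distrib, vPow]
    · simp [vFact]
  have hc : (∏ p : T n, (if p.1.1 = p.1.2 then (1 / 2 : ℂ) else 1) ^ toT a p)
      = ((2 : ℂ) ^ hatV a)⁻¹ := by
    have step : ∀ p : T n, (if p.1.1 = p.1.2 then (1 / 2 : ℂ) else 1) ^ toT a p
        = (1 / 2 : ℂ) ^ (if p.1.1 = p.1.2 then a p.1.1 p.1.2 else 0) := by
      intro p
      split_ifs with h
      · rfl
      · simp
    rw [Finset.prod_congr rfl fun p _ => step p, Finset.prod_pow_eq_pow_sum,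
      sum_ite_diag a, div_pow, one_pow, one_div]
  have hW2 : (∏ p : T n, W p.1.1 p.1.2 ^ toT a p) = mPow W a := by
    rw [mPow]
    exact prod_T (f := fun i j => W i j ^ a i j)
  have hU2 : (∏ p : T n, (U p.1.1 * U p.1.2) ^ toT a p) = ∏ k, U k ^ tildeV a k :=
    prod_U_T U a ha
  have hA2 : (∏ p : T n, ((toT a p)! : ℂ)) = (aFact a : ℂ) := by
    rw [aFact]
    push_cast
    rw [show (∏ p : T n, ((toT a p)! : ℂ)) = ∏ p : T n, ((a p.1.1 p.1.2)! : ℂ) from rfl,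
      prod_T (f := fun i j => ((a i j)! : ℂ))]
  have h2 : (∏ p : T n, ((if p.1.1 = p.1.2 then (1 / 2 : ℂ) else 1) * W p.1.1 p.1.2
          * (U p.1.1 * U p.1.2)) ^ toT a p / ((toT a p)! : ℂ))
      = mPow W a * (∏ k, U k ^ tildeV a k) / ((2 : ℂ) ^ hatV a * (aFact a : ℂ)) := by
    rw [Finset.prod_div_distrib, hA2]
    have hsplit : (∏ p : T n, ((if p.1.1 = p.1.2 then (1 / 2 : ℂ) else 1) * W p.1.1 p.1.2
          * (U p.1.1 * U p.1.2)) ^ toT a p)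
        = (∏ p : T n, (if p.1.1 = p.1.2 then (1 / 2 : ℂ) else 1) ^ toT a p)
          * (∏ p : T n, W p.1.1 p.1.2 ^ toT a p)
          * (∏ p : T n, (U p.1.1 * U p.1.2) ^ toT a p) := by
      rw [← Finset.prod_mul_distrib, ← Finset.prod_mul_distrib]
      exact Finset.prod_congr rfl fun p _ => by rw [mul_pow, mul_pow]
    rw [hsplit, hc, hW2, hU2]
    have h2n : (2 : ℂ) ^ hatV a ≠ 0 := pow_ne_zero _ two_ne_zero
    rw [div_eq_div_iff (aFact_ne_zero a) (mul_ne_zero h2n (aFact_ne_zero a))]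
    field_simp
  have hU3 : vPow U r * (∏ k, U k ^ tildeV a k) = vPow U (fun k => r k + tildeV a k) := by
    simp [vPow, ← Finset.prod_mul_distrib, pow_add]
  have h2n : (2 : ℂ) ^ hatV a ≠ 0 := pow_ne_zero _ two_ne_zero
  rw [h1, h2, div_mul_div_comm,
    div_eq_div_iff (mul_ne_zero (vFact_ne_zero r) (mul_ne_zero h2n (aFact_ne_zero a)))
      (mul_ne_zero (mul_ne_zero h2n (aFact_ne_zero a)) (vFact_ne_zero r)), ← hU3]
  ring

def proj (q : (Fin n → ℕ) × (T n → ℕ)) : Fin n → ℕ :=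
  fun k => q.1 k + tildeV (matOf q.2) k

def fibEquiv (s : Fin n → ℕ) : (proj ⁻¹' {s} : Set ((Fin n → ℕ) × (T n → ℕ))) ≃
    ↥{a : Matrix (Fin n) (Fin n) ℕ | a.IsSymm ∧ ∀ k, tildeV a k ≤ s k} where
  toFun q := ⟨matOf q.1.2, matOf_symm _, fun k => by
    have hq : proj q.1 = s := q.2
    have h := congrFun hq k
    simp only [proj] at h
    omega⟩
  invFun x := ⟨(fun k => s k - tildeV x.1 k, toT x.1), by
    have hmm : matOf (toT x.1) = x.1 := matOf_toT x.2.1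
    show proj _ = s
    funext k
    simp only [proj, hmm]
    exact Nat.sub_add_cancel (x.2.2 k)⟩
  left_inv q := by
    apply Subtype.ext
    have hq : proj q.1 = s := q.2
    have h2 : toT (matOf q.1.2) = q.1.2 := toT_matOf q.1.2
    refine Prod.ext ?_ ?_
    · show (fun k => s k - tildeV (matOf q.1.2) k) = q.1.1
      funext k
      have := congrFun hq k
      simp only [proj] at this
      omega
    · exact h2
  right_inv x := Subtype.ext (matOf_toT x.2.1)


section Main

variable (U Z : Fin n → ℂ) (W : Matrix (Fin n) (Fin n) ℂ)

lemma fiber_sum (hW : W.IsSymm) (s : Fin n → ℕ) :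
    (∑' q : (proj ⁻¹' {s} : Set ((Fin n → ℕ) × (T n → ℕ))),
        ((∏ i, (U i * Z i) ^ (q : (Fin n → ℕ) × (T n → ℕ)).1 i / (((q : (Fin n → ℕ) × (T n → ℕ)).1 i)! : ℂ)) *
          ∏ p : T n, ((if p.1.1 = p.1.2 then (1 / 2 : ℂ) else 1) * W p.1.1 p.1.2
              * (U p.1.1 * U p.1.2)) ^ (q : (Fin n → ℕ) × (T n → ℕ)).2 p
            / (((q : (Fin n → ℕ) × (T n → ℕ)).2 p)! : ℂ)))
      = vPow U s / (vFact s : ℂ) * Ppoly s Z W := by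
  classical
  have hR : vPow U s / (vFact s : ℂ) * Ppoly s Z W
      = ∑' xx : ↥{a : Matrix (Fin n) (Fin n) ℕ | a.IsSymm ∧ ∀ k, tildeV a k ≤ s k},
          vPow U s * vPow Z (fun k => s k - tildeV (xx : Matrix (Fin n) (Fin n) ℕ) k)
              * mPow W (xx : Matrix (Fin n) (Fin n) ℕ) /
            ((2 ^ hatV (xx : Matrix (Fin n) (Fin n) ℕ) : ℂ)
              * (aFact (xx : Matrix (Fin n) (Fin n) ℕ) : ℂ)
              * (vFact (fun k => s k - tildeV (xx : Matrix (Fin n) (Fin n) ℕ) k) : ℂ)) := by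
    rw [Ppoly, ← tsum_mul_left]
    rw [← tsum_subtype_eq_of_support_subset
        (s := {a : Matrix (Fin n) (Fin n) ℕ | a.IsSymm ∧ ∀ k, tildeV a k ≤ s k}) ?_]
    · refine tsum_congr fun xx => ?_
      rw [if_pos (show ((xx : Matrix (Fin n) (Fin n) ℕ).IsSymm ∧
        ∀ k, tildeV (xx : Matrix (Fin n) (Fin n) ℕ) k ≤ s k) from xx.2)]
      have h2n : (2 : ℂ) ^ hatV (xx : Matrix (Fin n) (Fin n) ℕ) ≠ 0 :=
        pow_ne_zero _ two_ne_zero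
      have hD : ((2 : ℂ) ^ hatV (xx : Matrix (Fin n) (Fin n) ℕ)
          * (aFact (xx : Matrix (Fin n) (Fin n) ℕ) : ℂ)
          * (vFact (fun k => s k - tildeV (xx : Matrix (Fin n) (Fin n) ℕ) k) : ℂ)) ≠ 0 :=
        mul_ne_zero (mul_ne_zero h2n (aFact_ne_zero _)) (vFact_ne_zero _)
      have key : ∀ (u v z m d : ℂ), v ≠ 0 → d ≠ 0 →
          u / v * (v / d * z * m) = u * z * m / d := by
        intro u v z m d hv hd
        field_simp
      exact key _ _ _ _ _ (vFact_ne_zero s) hD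
    · intro a ha
      simp only [Function.mem_support, ne_eq] at ha
      by_contra hmem
      have hmem' : ¬(a.IsSymm ∧ ∀ k, tildeV a k ≤ s k) := hmem
      exact ha (by rw [if_neg hmem', mul_zero])
  rw [hR, ← Equiv.tsum_eq (fibEquiv s)]
  refine tsum_congr fun q => ?_
  obtain ⟨⟨r, b⟩, hq⟩ := q
  have hq' : (fun k => r k + tildeV (matOf b) k) = s := hq
  have hterm := term_eval U Z W (matOf b) (matOf_symm b) r
  rw [toT_matOf b] at hterm
  have hr : (fun k => s k - tildeV (matOf b) k) = r := by
    funext k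
    have := congrFun hq' k
    omega
  show ((∏ i, (U i * Z i) ^ r i / ((r i)! : ℂ)) *
      ∏ p : T n, ((if p.1.1 = p.1.2 then (1 / 2 : ℂ) else 1) * W p.1.1 p.1.2
          * (U p.1.1 * U p.1.2)) ^ b p / ((b p)! : ℂ)) = _
  rw [hterm]
  show _ = vPow U s * vPow Z (fun k => s k - tildeV (matOf b) k) * mPow W (matOf b) /
      ((2 ^ hatV (matOf b) : ℂ) * (aFact (matOf b) : ℂ)
        * (vFact (fun k => s k - tildeV (matOf b) k) : ℂ))
  rw [hq', hr]

end Main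

end Stmt10Aux

open Stmt10Aux in
/-- `exp(U ᵗZ + ½ U W ᵗU) = ∑_{s∈ℕⁿ} (U^s/s!) P_s(Z,W)`, with absolute convergence. -/
theorem stmt10 (n : ℕ) (U Z : Fin n → ℂ) (W : Matrix (Fin n) (Fin n) ℂ)
    (hW : W.IsSymm) :
    HasSum (fun s : Fin n → ℕ => vPow U s / (vFact s : ℂ) * Ppoly s Z W)
        (Complex.exp (U ⬝ᵥ Z + (1 / 2 : ℂ) * ((U ᵥ* W) ⬝ᵥ U)))
    ∧ Summable (fun s : Fin n → ℕ => ‖vPow U s / (vFact s : ℂ) * Ppoly s Z W‖) := by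
  classical
  set x : (Fin n ⊕ T n) → ℂ := Sum.elim (fun i => U i * Z i)
    (fun p => (if p.1.1 = p.1.2 then (1 / 2 : ℂ) else 1) * W p.1.1 p.1.2
      * (U p.1.1 * U p.1.2)) with hx
  obtain ⟨hx1, hx2⟩ := keyP x
  have hval : ∑ p, x p = U ⬝ᵥ Z + (1 / 2 : ℂ) * ((U ᵥ* W) ⬝ᵥ U) := by
    have h2 : (∑ p : T n, x (Sum.inr p))
        = ∑ p : T n, (if p.1.1 = p.1.2 then (1 / 2 : ℂ) else 1) * W p.1.1 p.1.2
            * (U p.1.1 * U p.1.2) := rfl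
    rw [Fintype.sum_sum_type, h2, half_sum U W hW]
    congr 1
  set E : (Fin n ⊕ T n → ℕ) ≃ (Fin n → ℕ) × (T n → ℕ) :=
    Equiv.sumArrowEquivProdArrow _ _ ℕ with hE
  set F : (Fin n → ℕ) × (T n → ℕ) → ℂ := fun q =>
    (∏ i, (U i * Z i) ^ q.1 i / ((q.1 i)! : ℂ)) *
      ∏ p : T n, ((if p.1.1 = p.1.2 then (1 / 2 : ℂ) else 1) * W p.1.1 p.1.2
          * (U p.1.1 * U p.1.2)) ^ q.2 p / ((q.2 p)! : ℂ) with hF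
  have hcomp : (fun g : Fin n ⊕ T n → ℕ => ∏ p, x p ^ g p / ((g p)! : ℂ)) = F ∘ E := by
    funext g
    show _ = F (E g)
    rw [hF, Fintype.prod_sum_type]
    rfl
  have hFsum : HasSum F (Complex.exp (U ⬝ᵥ Z + (1 / 2 : ℂ) * ((U ᵥ* W) ⬝ᵥ U))) := by
    rw [← hval]
    rw [hcomp] at hx1
    exact E.hasSum_iff.mp hx1
  have hFn : Summable (fun q => ‖F q‖) := by
    have : (fun g : Fin n ⊕ T n → ℕ => ‖∏ p, x p ^ g p / ((g p)! : ℂ)‖)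
        = (fun q => ‖F q‖) ∘ E := by
      funext g
      exact congrArg norm (congrFun hcomp g)
    rw [this] at hx2
    exact E.summable_iff.mp hx2
  have hfibeq : (fun s : Fin n → ℕ =>
        ∑' q : (proj ⁻¹' {s} : Set ((Fin n → ℕ) × (T n → ℕ))), F q)
      = fun s : Fin n → ℕ => vPow U s / (vFact s : ℂ) * Ppoly s Z W :=
    funext fun s => fiber_sum U Z W hW s
  constructor
  · have hreg := hFsum.tsum_fiberwise proj
    rwa [hfibeq] at hreg
  · have hregN := (hFn.hasSum.tsum_fiberwise proj).summable
    refine Summable.of_nonneg_of_le (fun s => norm_nonneg _) (fun s => ?_) hregN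
    rw [← congrFun hfibeq s]
    exact norm_tsum_le_tsum_norm (hFn.subtype _)
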